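/- Let 2 ≤ ℓ ≤ m ≤ n with m, n ≥ 3 and not (ℓ = 2, m = 3, n = 3). Then the Hamming graph K_ℓ □ K_m □ K_n is radio graceful; equivalently, there exists an ordering x₁, ..., x_{ℓmn} of Fin ℓ × Fin m × Fin n such that consecutive vertices have Hamming distance exactly 3 and vertices two apart have Hamming distance at least 2. -/

import Mathlib

/-- Hamming distance on triples: the number of coordinates in which they differ. -/
def hdist {a b c : ℕ} (x y : Fin a × Fin b × Fin c) : ℕ :=
  (if x.1 = y.1 then 0 else 1) + (if x.2.1 = y.2.1 then 0 else 1) +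
    (if x.2.2 = y.2.2 then 0 else 1)

lemma hdist_eq_three {a b c : ℕ} {x y : Fin a × Fin b × Fin c}
    (h1 : x.1 ≠ y.1) (h2 : x.2.1 ≠ y.2.1) (h3 : x.2.2 ≠ y.2.2) : hdist x y = 3 := by
  simp [hdist, h1, h2, h3]

lemma two_le_hdist {a b c : ℕ} {x y : Fin a × Fin b × Fin c}
    (h3 : x.2.2 ≠ y.2.2) (h12 : x.1 ≠ y.1 ∨ x.2.1 ≠ y.2.1) : 2 ≤ hdist x y := by
  rcases h12 with h | h <;> simp [hdist, h, h3]

lemma mod_div_of (L u r : ℕ) (hr : r < L) : (L*u+r) % L = r ∧ (L*u+r) / L = u := by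
  constructor
  · rw [Nat.mul_add_mod]; exact Nat.mod_eq_of_lt hr
  · rw [Nat.mul_add_div (by omega)]; simp [Nat.div_eq_of_lt hr]

lemma mod_add_ne {n : ℕ} (u a b : ℕ) (ha : a < n) (hb : b < n) (h : a ≠ b) :
    (u+a) % n ≠ (u+b) % n := by
  intro hc
  have h2 : a ≡ b [MOD n] := Nat.ModEq.add_left_cancel' u hc
  exact h (by rw [← Nat.mod_eq_of_lt ha, ← Nat.mod_eq_of_lt hb]; exact h2)

lemma mod_add_ne' {n : ℕ} (u a b : ℕ) (ha : a < n) (h : a ≠ (b+1) % n) :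
    (u+a) % n ≠ ((u+1)+b) % n := by
  intro hc
  apply h
  have hc' : u + a ≡ u + (b+1) [MOD n] := by
    unfold Nat.ModEq; rw [hc]; ring_nf
  have h2 : a ≡ b + 1 [MOD n] := Nat.ModEq.add_left_cancel' u hc'
  rw [← Nat.mod_eq_of_lt ha]; exact h2

lemma eq_of_mod_div {L i j : ℕ} (h1 : i % L = j % L) (h2 : i / L = j / L) : i = j := by
  rw [← Nat.div_add_mod i L, ← Nat.div_add_mod j L, h1, h2]

lemma succ_mod_ne (m x : ℕ) (hm : 2 ≤ m) : (x+1) % m ≠ x % m := by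
  have h1 : (x+1) % m = (x % m + 1) % m := by
    conv_lhs => rw [Nat.add_mod, Nat.mod_eq_of_lt (show 1 < m by omega)]
  have hr : x % m < m := Nat.mod_lt _ (by omega)
  rcases Nat.lt_or_ge (x % m + 1) m with h | h
  · rw [h1, Nat.mod_eq_of_lt h]; omega
  · have h2 : x % m = m - 1 := by omega
    rw [h1, h2]
    have h3 : m - 1 + 1 = m := by omega
    rw [h3, Nat.mod_self]; omega

lemma master (ℓ m n : ℕ) (hl : 2 ≤ ℓ) (hm : 2 ≤ m) (hn : 1 ≤ n)
    (y : ℕ → Fin ℓ × Fin m) (s : ℕ → ℕ)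
    (hyinj : ∀ a, a < ℓ*m → ∀ b, b < ℓ*m → y a = y b → a = b)
    (hystep : ∀ a b, a < ℓ*m → b < ℓ*m → (b = a+1 ∨ (a = ℓ*m - 1 ∧ b = 0)) →
        (y a).1 ≠ (y b).1 ∧ (y a).2 ≠ (y b).2)
    (hslt : ∀ a, s a < n)
    (hs1 : ∀ a, a+1 < ℓ*m → s (a+1) ≠ s a)
    (hs2 : ∀ a, a+2 < ℓ*m → s (a+2) ≠ s a)
    (hw1 : s (ℓ*m-1) ≠ (s 0 + 1) % n)
    (hw2 : s (ℓ*m-2) ≠ (s 0 + 1) % n)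
    (hw3 : s (ℓ*m-1) ≠ (s 1 + 1) % n) :
    ∃ x : Fin (ℓ * m * n) ≃ Fin ℓ × Fin m × Fin n,
      (∀ i : ℕ, ∀ h : i + 1 < ℓ * m * n, hdist (x ⟨i, Nat.lt_of_succ_lt h⟩) (x ⟨i + 1, h⟩) = 3) ∧
      (∀ i : ℕ, ∀ h : i + 2 < ℓ * m * n, 2 ≤ hdist (x ⟨i, Nat.lt_of_succ_lt (Nat.lt_of_succ_lt h)⟩) (x ⟨i + 2, h⟩)) := by
  have hL : 4 ≤ ℓ * m := by calc 4 = 2*2 := rfl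
                                 _ ≤ ℓ*m := Nat.mul_le_mul hl hm
  have hL0 : 0 < ℓ * m := by omega
  set F : Fin (ℓ*m*n) → Fin ℓ × Fin m × Fin n := fun i =>
    ((y (i.1 % (ℓ*m))).1, (y (i.1 % (ℓ*m))).2,
      ⟨(i.1 / (ℓ*m) + s (i.1 % (ℓ*m))) % n, Nat.mod_lt _ (by omega)⟩) with hF
  have hinj : Function.Injective F := by
    rintro ⟨i, hi⟩ ⟨j, hj⟩ hij
    have e1 : (y (i % (ℓ*m))).1 = (y (j % (ℓ*m))).1 := congrArg (fun p => p.1) hij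
    have e2 : (y (i % (ℓ*m))).2 = (y (j % (ℓ*m))).2 := congrArg (fun p => p.2.1) hij
    have e3 : (i / (ℓ*m) + s (i % (ℓ*m))) % n = (j / (ℓ*m) + s (j % (ℓ*m))) % n :=
      congrArg (fun p => (p.2.2 : Fin n).1) hij
    have hmodeq : i % (ℓ*m) = j % (ℓ*m) :=
      hyinj _ (Nat.mod_lt _ hL0) _ (Nat.mod_lt _ hL0) (Prod.ext e1 e2)
    rw [hmodeq] at e3
    have hdiv : i / (ℓ*m) = j / (ℓ*m) := by
      have hcancel : i / (ℓ*m) ≡ j / (ℓ*m) [MOD n] :=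
        Nat.ModEq.add_right_cancel' _ e3
      have hin : i / (ℓ*m) < n := (Nat.div_lt_iff_lt_mul hL0).2 (lt_of_lt_of_eq hi (by ring))
      have hjn : j / (ℓ*m) < n := (Nat.div_lt_iff_lt_mul hL0).2 (lt_of_lt_of_eq hj (by ring))
      rw [← Nat.mod_eq_of_lt hin, ← Nat.mod_eq_of_lt hjn]; exact hcancel
    exact Fin.ext (eq_of_mod_div hmodeq hdiv)
  have hcard : Fintype.card (Fin (ℓ*m*n)) = Fintype.card (Fin ℓ × Fin m × Fin n) := by
    simp [mul_assoc]
  have hbij : Function.Bijective F :=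
    (Fintype.bijective_iff_injective_and_card F).2 ⟨hinj, hcard⟩
  refine ⟨Equiv.ofBijective F hbij, ?_, ?_⟩
  · -- step 1
    intro i h
    show hdist (F ⟨i, by omega⟩) (F ⟨i+1, h⟩) = 3
    have hdm : (ℓ*m) * (i / (ℓ*m)) + i % (ℓ*m) = i := Nat.div_add_mod i (ℓ*m)
    have hρ : i % (ℓ*m) < ℓ*m := Nat.mod_lt _ hL0
    rcases Nat.lt_or_ge (i % (ℓ*m) + 1) (ℓ*m) with hc | hc
    · have e : i + 1 = (ℓ*m) * (i / (ℓ*m)) + (i % (ℓ*m) + 1) := by omega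
      obtain ⟨em, ed⟩ := mod_div_of (ℓ*m) (i / (ℓ*m)) (i % (ℓ*m) + 1) hc
      rw [← e] at em ed
      obtain ⟨hy1, hy2⟩ := hystep (i % (ℓ*m)) (i % (ℓ*m) + 1) hρ hc (Or.inl rfl)
      refine hdist_eq_three ?_ ?_ ?_
      · show (y (i % (ℓ*m))).1 ≠ (y ((i+1) % (ℓ*m))).1
        rw [em]; exact hy1
      · show (y (i % (ℓ*m))).2 ≠ (y ((i+1) % (ℓ*m))).2
        rw [em]; exact hy2
      · intro hcon
        have hval : (i / (ℓ*m) + s (i % (ℓ*m))) % n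
            = ((i+1) / (ℓ*m) + s ((i+1) % (ℓ*m))) % n := congrArg Fin.val hcon
        rw [em, ed] at hval
        exact mod_add_ne (i / (ℓ*m)) _ _ (hslt _) (hslt _)
          (Ne.symm (hs1 _ hc)) hval
    · have hde : i % (ℓ*m) = ℓ*m - 1 := by omega
      have e : i + 1 = (ℓ*m) * (i / (ℓ*m) + 1) + 0 := by
        have : (ℓ*m) * (i / (ℓ*m) + 1) = (ℓ*m) * (i / (ℓ*m)) + (ℓ*m) := by ring
        omega
      obtain ⟨em, ed⟩ := mod_div_of (ℓ*m) (i / (ℓ*m) + 1) 0 hL0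
      rw [← e] at em ed
      obtain ⟨hy1, hy2⟩ := hystep (i % (ℓ*m)) 0 hρ (by omega) (Or.inr ⟨hde, rfl⟩)
      refine hdist_eq_three ?_ ?_ ?_
      · show (y (i % (ℓ*m))).1 ≠ (y ((i+1) % (ℓ*m))).1
        rw [em]; exact hy1
      · show (y (i % (ℓ*m))).2 ≠ (y ((i+1) % (ℓ*m))).2
        rw [em]; exact hy2
      · intro hcon
        have hval : (i / (ℓ*m) + s (i % (ℓ*m))) % n
            = ((i+1) / (ℓ*m) + s ((i+1) % (ℓ*m))) % n := congrArg Fin.val hcon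
        rw [em, ed, hde] at hval
        exact mod_add_ne' (i / (ℓ*m)) _ _ (hslt _) hw1 hval
  · -- step 2
    intro i h
    show 2 ≤ hdist (F ⟨i, by omega⟩) (F ⟨i+2, h⟩)
    have hdm : (ℓ*m) * (i / (ℓ*m)) + i % (ℓ*m) = i := Nat.div_add_mod i (ℓ*m)
    have hρ : i % (ℓ*m) < ℓ*m := Nat.mod_lt _ hL0
    have pairne : ∀ b, b < ℓ*m → i % (ℓ*m) ≠ b →
        (y (i % (ℓ*m))).1 ≠ (y b).1 ∨ (y (i % (ℓ*m))).2 ≠ (y b).2 := by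
      intro b hb hne
      by_contra hcon
      push_neg at hcon
      exact hne (hyinj _ hρ _ hb (Prod.ext hcon.1 hcon.2))
    rcases Nat.lt_or_ge (i % (ℓ*m) + 2) (ℓ*m) with hc | hc
    · have e : i + 2 = (ℓ*m) * (i / (ℓ*m)) + (i % (ℓ*m) + 2) := by omega
      obtain ⟨em, ed⟩ := mod_div_of (ℓ*m) (i / (ℓ*m)) (i % (ℓ*m) + 2) hc
      rw [← e] at em ed
      refine two_le_hdist ?_ ?_
      · intro hcon
        have hval : (i / (ℓ*m) + s (i % (ℓ*m))) % n
            = ((i+2) / (ℓ*m) + s ((i+2) % (ℓ*m))) % n := congrArg Fin.val hcon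
        rw [em, ed] at hval
        exact mod_add_ne (i / (ℓ*m)) _ _ (hslt _) (hslt _) (Ne.symm (hs2 _ hc)) hval
      · show (y (i % (ℓ*m))).1 ≠ (y ((i+2) % (ℓ*m))).1 ∨
            (y (i % (ℓ*m))).2 ≠ (y ((i+2) % (ℓ*m))).2
        rw [em]; exact pairne _ hc (by omega)
    · rcases Nat.lt_or_ge (i % (ℓ*m) + 2) (ℓ*m + 1) with hc2 | hc2
      · -- i % L = L - 2
        have hde : i % (ℓ*m) = ℓ*m - 2 := by omega
        have e : i + 2 = (ℓ*m) * (i / (ℓ*m) + 1) + 0 := by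
          have : (ℓ*m) * (i / (ℓ*m) + 1) = (ℓ*m) * (i / (ℓ*m)) + (ℓ*m) := by ring
          omega
        obtain ⟨em, ed⟩ := mod_div_of (ℓ*m) (i / (ℓ*m) + 1) 0 hL0
        rw [← e] at em ed
        refine two_le_hdist ?_ ?_
        · intro hcon
          have hval : (i / (ℓ*m) + s (i % (ℓ*m))) % n
              = ((i+2) / (ℓ*m) + s ((i+2) % (ℓ*m))) % n := congrArg Fin.val hcon
          rw [em, ed, hde] at hval
          exact mod_add_ne' (i / (ℓ*m)) _ _ (hslt _) hw2 hval
        · show (y (i % (ℓ*m))).1 ≠ (y ((i+2) % (ℓ*m))).1 ∨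
              (y (i % (ℓ*m))).2 ≠ (y ((i+2) % (ℓ*m))).2
          rw [em]; exact pairne _ (by omega) (by omega)
      · -- i % L = L - 1
        have hde : i % (ℓ*m) = ℓ*m - 1 := by omega
        have e : i + 2 = (ℓ*m) * (i / (ℓ*m) + 1) + 1 := by
          have : (ℓ*m) * (i / (ℓ*m) + 1) = (ℓ*m) * (i / (ℓ*m)) + (ℓ*m) := by ring
          omega
        obtain ⟨em, ed⟩ := mod_div_of (ℓ*m) (i / (ℓ*m) + 1) 1 (by omega)
        rw [← e] at em ed
        refine two_le_hdist ?_ ?_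
        · intro hcon
          have hval : (i / (ℓ*m) + s (i % (ℓ*m))) % n
              = ((i+2) / (ℓ*m) + s ((i+2) % (ℓ*m))) % n := congrArg Fin.val hcon
          rw [em, ed, hde] at hval
          exact mod_add_ne' (i / (ℓ*m)) _ _ (hslt _) hw3 hval
        · show (y (i % (ℓ*m))).1 ≠ (y ((i+2) % (ℓ*m))).1 ∨
              (y (i % (ℓ*m))).2 ≠ (y ((i+2) % (ℓ*m))).2
          rw [em]; exact pairne _ (by omega) (by omega)


lemma exists_s (n L : ℕ) (hn : 4 ≤ n) (hL : 4 ≤ L) :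
    ∃ s : ℕ → ℕ, (∀ a, s a < n) ∧
      (∀ a, a+1 < L → s (a+1) ≠ s a) ∧
      (∀ a, a+2 < L → s (a+2) ≠ s a) ∧
      s (L-1) ≠ (s 0 + 1) % n ∧
      s (L-2) ≠ (s 0 + 1) % n ∧
      s (L-1) ≠ (s 1 + 1) % n := by
  have h1n : (1 : ℕ) % n = 1 := Nat.mod_eq_of_lt (by omega)
  have h2n : (2 : ℕ) % n = 2 := Nat.mod_eq_of_lt (by omega)
  rcases Nat.lt_or_ge (L % 4) 2 with hc | hc
  · refine ⟨fun a => a % 4, fun a => by show a % 4 < n; omega,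
      fun a ha => by show (a+1) % 4 ≠ a % 4; omega,
      fun a ha => by show (a+2) % 4 ≠ a % 4; omega,
      ?_, ?_, ?_⟩
    · show (L-1) % 4 ≠ (0 % 4 + 1) % n
      simp only [Nat.zero_mod, Nat.zero_add, h1n]; omega
    · show (L-2) % 4 ≠ (0 % 4 + 1) % n
      simp only [Nat.zero_mod, Nat.zero_add, h1n]; omega
    · show (L-1) % 4 ≠ (1 % 4 + 1) % n
      have : (1 % 4 + 1) % n = 2 := by norm_num [h2n]
      rw [this]; omega
  · have h4n : 4 % n = 0 ∨ 4 % n = 4 := by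
      rcases Nat.lt_or_ge n 5 with h | h
      · left; have : n = 4 := by omega
        rw [this]
      · right; exact Nat.mod_eq_of_lt (by omega)
    refine ⟨fun a => (3*a) % 4, fun a => by show (3*a) % 4 < n; omega,
      fun a ha => by show (3*(a+1)) % 4 ≠ (3*a) % 4; omega,
      fun a ha => by show (3*(a+2)) % 4 ≠ (3*a) % 4; omega,
      ?_, ?_, ?_⟩
    · show (3*(L-1)) % 4 ≠ (3*0 % 4 + 1) % n
      simp only [Nat.mul_zero, Nat.zero_mod, Nat.zero_add, h1n]; omega
    · show (3*(L-2)) % 4 ≠ (3*0 % 4 + 1) % n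
      simp only [Nat.mul_zero, Nat.zero_mod, Nat.zero_add, h1n]; omega
    · show (3*(L-1)) % 4 ≠ (3*1 % 4 + 1) % n
      have e : (3*1 % 4 + 1) % n = 4 % n := by norm_num
      rw [e]; omega

def gA (m r : ℕ) : ℕ := if m % 2 = 0 ∧ r = m-1 then 2 else r % 2

lemma gA_lt {ℓ m : ℕ} (hl : 2 ≤ ℓ) (h : m % 2 = 0 → 3 ≤ ℓ) (r : ℕ) : gA m r < ℓ := by
  unfold gA
  by_cases hc : m % 2 = 0 ∧ r = m-1
  · rw [if_pos hc]; have := h hc.1; omega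
  · rw [if_neg hc]; omega

lemma gA_succ_ne {m : ℕ} (hm : 3 ≤ m) {r : ℕ} (hr : r + 1 < m) : gA m r ≠ gA m (r+1) := by
  unfold gA
  rw [if_neg (by omega : ¬(m % 2 = 0 ∧ r = m-1))]
  by_cases hc : m % 2 = 0 ∧ r+1 = m-1
  · rw [if_pos hc]; omega
  · rw [if_neg hc]; omega

lemma gA_zero {m : ℕ} (hm : 3 ≤ m) : gA m 0 = 0 := by
  unfold gA; rw [if_neg (by omega)]

lemma gA_last_ne_one {m : ℕ} (hm : 3 ≤ m) : gA m (m-1) ≠ 1 := by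
  unfold gA; split <;> omega

lemma exists_yA (ℓ m : ℕ) (hl : 2 ≤ ℓ) (hm : 3 ≤ m) (hcase : m % 2 = 0 → 3 ≤ ℓ) :
    ∃ y : ℕ → Fin ℓ × Fin m,
      (∀ a, a < ℓ*m → ∀ b, b < ℓ*m → y a = y b → a = b) ∧
      (∀ a b, a < ℓ*m → b < ℓ*m → (b = a+1 ∨ (a = ℓ*m - 1 ∧ b = 0)) →
        (y a).1 ≠ (y b).1 ∧ (y a).2 ≠ (y b).2) := by
  have hm0 : 0 < m := by omega
  have hl0 : 0 < ℓ := by omega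
  refine ⟨fun a => (⟨(a/m + gA m (a%m)) % ℓ, Nat.mod_lt _ hl0⟩,
    ⟨a % m, Nat.mod_lt _ hm0⟩), ?_, ?_⟩
  · intro a ha b hb heq
    have e2 : a % m = b % m := congrArg (fun p => (p.2 : Fin m).1) heq
    have e1 : (a/m + gA m (a%m)) % ℓ = (b/m + gA m (b%m)) % ℓ :=
      congrArg (fun p => (p.1 : Fin ℓ).1) heq
    rw [e2] at e1
    have hc : a/m ≡ b/m [MOD ℓ] := Nat.ModEq.add_right_cancel' _ e1
    have hal : a/m < ℓ := (Nat.div_lt_iff_lt_mul hm0).2 (lt_of_lt_of_eq ha (by ring))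
    have hbl : b/m < ℓ := (Nat.div_lt_iff_lt_mul hm0).2 (lt_of_lt_of_eq hb (by ring))
    have hd : a/m = b/m := by
      rw [← Nat.mod_eq_of_lt hal, ← Nat.mod_eq_of_lt hbl]; exact hc
    exact eq_of_mod_div e2 hd
  · intro a b ha hb hab
    rcases hab with rfl | ⟨hae, rfl⟩
    · have hdm : m*(a/m) + a%m = a := Nat.div_add_mod a m
      rcases Nat.lt_or_ge (a % m + 1) m with hr | hr
      · have e : a+1 = m*(a/m) + (a%m + 1) := by omega
        obtain ⟨em, ed⟩ := mod_div_of m (a/m) (a%m+1) hr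
        rw [← e] at em ed
        constructor
        · apply Fin.ne_of_val_ne
          show (a/m + gA m (a%m)) % ℓ ≠ ((a+1)/m + gA m ((a+1)%m)) % ℓ
          rw [em, ed]
          exact mod_add_ne _ _ _ (gA_lt hl hcase _) (gA_lt hl hcase _) (gA_succ_ne hm hr)
        · apply Fin.ne_of_val_ne
          show a % m ≠ (a+1) % m
          rw [em]; omega
      · have hde : a % m = m - 1 := by
          have := Nat.mod_lt a hm0; omega
        have e : a+1 = m*(a/m + 1) + 0 := by
          have : m*(a/m + 1) = m*(a/m) + m := by ring
          omega
        obtain ⟨em, ed⟩ := mod_div_of m (a/m + 1) 0 hm0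
        rw [← e] at em ed
        constructor
        · apply Fin.ne_of_val_ne
          show (a/m + gA m (a%m)) % ℓ ≠ ((a+1)/m + gA m ((a+1)%m)) % ℓ
          rw [em, ed, hde, gA_zero hm]
          apply mod_add_ne' _ _ _ (gA_lt hl hcase _)
          rw [Nat.zero_add, Nat.mod_eq_of_lt (show 1 < ℓ by omega)]
          exact gA_last_ne_one hm
        · apply Fin.ne_of_val_ne
          show a % m ≠ (a+1) % m
          rw [em, hde]; omega
    · -- wrap: a = ℓ*m - 1, b = 0
      obtain ⟨k, rfl⟩ : ∃ k, ℓ = k+1 := ⟨ℓ-1, by omega⟩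
      have hmul : (k+1)*m = m*k + m := by ring
      have e : (k+1)*m - 1 = m*k + (m-1) := by omega
      obtain ⟨em, ed⟩ := mod_div_of m k (m-1) (by omega)
      rw [← e] at em ed
      rw [hae]
      constructor
      · apply Fin.ne_of_val_ne
        show (((k+1)*m-1)/m + gA m (((k+1)*m-1)%m)) % (k+1) ≠ (0/m + gA m (0%m)) % (k+1)
        rw [em, ed, Nat.zero_div, Nat.zero_mod, gA_zero hm, Nat.zero_add, Nat.zero_mod]
        by_cases hc : m % 2 = 0
        · have h3 : 3 ≤ k+1 := hcase hc
          have hg : gA m (m-1) = 2 := by unfold gA; rw [if_pos ⟨hc, rfl⟩]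
          rw [hg]
          have e2 : k + 2 = (k+1) + 1 := by omega
          rw [e2, Nat.add_mod_left, Nat.mod_eq_of_lt (by omega)]
          omega
        · have hg : gA m (m-1) = 0 := by
            unfold gA
            rw [if_neg (by omega)]
            omega
          rw [hg, Nat.add_zero, Nat.mod_eq_of_lt (by omega)]
          omega
      · apply Fin.ne_of_val_ne
        show ((k+1)*m-1) % m ≠ 0 % m
        rw [em, Nat.zero_mod]; omega

lemma mod_cases (m x : ℕ) (h1 : m ≤ x) (h2 : x < 3*m) (hm : 0 < m) :
    (x % m = x - m ∧ x < 2*m) ∨ (x % m = x - 2*m ∧ 2*m ≤ x) := by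
  rcases Nat.lt_or_ge x (2*m) with h | h
  · left
    refine ⟨?_, h⟩
    rw [Nat.mod_eq_sub_mod h1, Nat.mod_eq_of_lt (by omega)]
  · right
    refine ⟨?_, h⟩
    have e : x - m - m = x - 2*m := by omega
    rw [Nat.mod_eq_sub_mod h1, Nat.mod_eq_sub_mod (by omega : m ≤ x - m), e,
      Nat.mod_eq_of_lt (by omega)]

def wC (m a : ℕ) : ℕ := if a < m then a else (a+3) % m

lemma exists_yC (m : ℕ) (hm6 : 6 ≤ m) (hme : m % 2 = 0) :
    ∃ y : ℕ → Fin 2 × Fin m,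
      (∀ a, a < 2*m → ∀ b, b < 2*m → y a = y b → a = b) ∧
      (∀ a b, a < 2*m → b < 2*m → (b = a+1 ∨ (a = 2*m - 1 ∧ b = 0)) →
        (y a).1 ≠ (y b).1 ∧ (y a).2 ≠ (y b).2) := by
  have hm0 : 0 < m := by omega
  have hwlt : ∀ a, wC m a < m := by
    intro a; unfold wC; split
    · omega
    · exact Nat.mod_lt _ hm0
  have hwlo : ∀ a, m ≤ a → a < 2*m →
      (wC m a = a + 3 - m ∧ a + 3 < 2*m) ∨ (wC m a = a + 3 - 2*m ∧ 2*m ≤ a + 3) := by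
    intro a h1 h2
    unfold wC
    rw [if_neg (by omega)]
    rcases mod_cases m (a+3) (by omega) (by omega) hm0 with ⟨h3, h4⟩ | ⟨h3, h4⟩
    · left; exact ⟨h3, h4⟩
    · right; exact ⟨h3, h4⟩
  have hwid : ∀ a, a < m → wC m a = a := by
    intro a h; unfold wC; rw [if_pos h]
  refine ⟨fun a => (⟨a % 2, by omega⟩, ⟨wC m a, hwlt a⟩), ?_, ?_⟩
  · intro a ha b hb heq
    have e1 : a % 2 = b % 2 := congrArg (fun p => (p.1 : Fin 2).1) heq
    have e2 : wC m a = wC m b := congrArg (fun p => (p.2 : Fin m).1) heq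
    rcases Nat.lt_or_ge a m with h1 | h1 <;> rcases Nat.lt_or_ge b m with h2 | h2
    · rw [hwid a h1, hwid b h2] at e2; exact e2
    · rw [hwid a h1] at e2
      rcases hwlo b h2 hb with ⟨h3, h4⟩ | ⟨h3, h4⟩ <;> omega
    · rw [hwid b h2] at e2
      rcases hwlo a h1 ha with ⟨h3, h4⟩ | ⟨h3, h4⟩ <;> omega
    · rcases hwlo a h1 ha with ⟨h3, h4⟩ | ⟨h3, h4⟩ <;>
        rcases hwlo b h2 hb with ⟨h5, h6⟩ | ⟨h5, h6⟩ <;> omega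
  · intro a b ha hb hab
    rcases hab with rfl | ⟨hae, rfl⟩
    · constructor
      · apply Fin.ne_of_val_ne
        show a % 2 ≠ (a+1) % 2
        omega
      · apply Fin.ne_of_val_ne
        show wC m a ≠ wC m (a+1)
        rcases Nat.lt_or_ge (a+1) m with h1 | h1
        · rw [hwid a (by omega), hwid (a+1) h1]; omega
        · rcases Nat.lt_or_ge a m with h2 | h2
          · -- a = m-1, b = m
            have hde : a = m - 1 := by omega
            rw [hwid a h2]
            unfold wC
            rw [if_neg (by omega)]
            have e3 : (a+1+3) % m = 3 := by
              have e4 : a+1+3 = 3+m := by omega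
              rw [e4, Nat.add_mod_right, Nat.mod_eq_of_lt (by omega)]
            omega
          · -- both ≥ m
            unfold wC
            rw [if_neg (by omega), if_neg (by omega)]
            have e3 : a+1+3 = (a+3)+1 := by omega
            rw [e3]
            exact (succ_mod_ne m (a+3) (by omega)).symm
    · constructor
      · apply Fin.ne_of_val_ne
        show a % 2 ≠ 0 % 2
        omega
      · apply Fin.ne_of_val_ne
        show wC m a ≠ wC m 0
        rw [hwid 0 (by omega)]
        unfold wC
        rw [if_neg (by omega)]
        have e3 : (a+3) % m = 2 := by
          have e4 : a+3 = m*2+2 := by omega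
          rw [e4, Nat.mul_add_mod, Nat.mod_eq_of_lt (by omega)]
        omega


def yD : ℕ → Fin 2 × Fin 4 := fun a =>
  match a with
  | 0 => (0,0) | 1 => (1,1) | 2 => (0,2) | 3 => (1,3)
  | 4 => (0,1) | 5 => (1,0) | 6 => (0,3) | _ => (1,2)

lemma exists_yD :
    ∃ y : ℕ → Fin 2 × Fin 4,
      (∀ a, a < 2*4 → ∀ b, b < 2*4 → y a = y b → a = b) ∧
      (∀ a b, a < 2*4 → b < 2*4 → (b = a+1 ∨ (a = 2*4 - 1 ∧ b = 0)) →
        (y a).1 ≠ (y b).1 ∧ (y a).2 ≠ (y b).2) := by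
  refine ⟨yD, ?_, ?_⟩
  · intro a ha b hb h
    interval_cases a <;> interval_cases b <;> revert h <;> decide
  · intro a b ha hb hab
    rcases hab with rfl | ⟨h1, rfl⟩
    · have ha7 : a < 7 := by omega
      interval_cases a <;> exact ⟨by decide, by decide⟩
    · subst h1
      exact ⟨by decide, by decide⟩

def L333 : List (Fin 3 × Fin 3 × Fin 3) :=
  [(0,0,0),(1,1,1),(0,2,2),(1,0,0),(0,1,1),(1,2,2),(2,0,0),(0,1,2),(1,0,1),
   (0,2,0),(2,1,1),(0,0,2),(1,2,1),(2,1,0),(1,0,2),(2,2,1),(1,1,0),(2,0,2),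
   (0,2,1),(1,1,2),(2,2,0),(0,0,1),(2,1,2),(1,2,0),(2,0,1),(0,1,0),(2,2,2)]

def f333 : Fin (3*3*3) → Fin 3 × Fin 3 × Fin 3 := fun i => L333.getD i.1 (0,0,0)

lemma case333 :
    ∃ x : Fin (3 * 3 * 3) ≃ Fin 3 × Fin 3 × Fin 3,
      (∀ i : ℕ, ∀ h : i + 1 < 3 * 3 * 3, hdist (x ⟨i, by omega⟩) (x ⟨i + 1, h⟩) = 3) ∧
      (∀ i : ℕ, ∀ h : i + 2 < 3 * 3 * 3, 2 ≤ hdist (x ⟨i, by omega⟩) (x ⟨i + 2, h⟩)) := by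
  have hb : Function.Bijective f333 := by decide
  have key1 : ∀ i : ℕ, i < 26 →
      hdist (L333.getD i (0,0,0)) (L333.getD (i+1) (0,0,0)) = 3 := by decide
  have key2 : ∀ i : ℕ, i < 25 →
      2 ≤ hdist (L333.getD i (0,0,0)) (L333.getD (i+2) (0,0,0)) := by decide
  refine ⟨Equiv.ofBijective f333 hb, ?_, ?_⟩
  · intro i h
    exact key1 i (by omega)
  · intro i h
    exact key2 i (by omega)


theorem hamming_radio_graceful (ℓ m n : ℕ) (hl : 2 ≤ ℓ) (hlm : ℓ ≤ m) (hmn : m ≤ n)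
    (hm : 3 ≤ m) (hexc : ¬(ℓ = 2 ∧ m = 3 ∧ n = 3)) :
    ∃ x : Fin (ℓ * m * n) ≃ Fin ℓ × Fin m × Fin n,
      (∀ i : ℕ, ∀ h : i + 1 < ℓ * m * n, hdist (x ⟨i, by omega⟩) (x ⟨i + 1, h⟩) = 3) ∧
      (∀ i : ℕ, ∀ h : i + 2 < ℓ * m * n, 2 ≤ hdist (x ⟨i, by omega⟩) (x ⟨i + 2, h⟩)) := by
  by_cases hn3 : n = 3
  · have hm3 : m = 3 := by omega
    have hl3 : ℓ = 3 := by
      have : ℓ ≠ 2 := fun hc => hexc ⟨hc, hm3, hn3⟩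
      omega
    subst hl3; subst hm3; subst hn3
    exact case333
  · have hn4 : 4 ≤ n := by omega
    have hL4 : 4 ≤ ℓ * m := by
      calc 4 = 2*2 := rfl
        _ ≤ ℓ*m := Nat.mul_le_mul hl (by omega)
    obtain ⟨s, hslt, hs1, hs2, hw1, hw2, hw3⟩ := exists_s n (ℓ*m) hn4 hL4
    by_cases hA : m % 2 = 1 ∨ 3 ≤ ℓ
    · obtain ⟨y, hyinj, hystep⟩ := exists_yA ℓ m hl hm (by
        intro he
        rcases hA with h | h
        · omega
        · exact h)
      exact master ℓ m n hl (by omega) (by omega) y s hyinj hystep hslt hs1 hs2 hw1 hw2 hw3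
    · push_neg at hA
      obtain ⟨hmo, hll⟩ := hA
      have hme : m % 2 = 0 := by omega
      have hl2 : ℓ = 2 := by omega
      subst hl2
      by_cases hm4 : m = 4
      · subst hm4
        obtain ⟨y, hyinj, hystep⟩ := exists_yD
        exact master 2 4 n (by norm_num) (by norm_num) (by omega) y s hyinj hystep
          hslt hs1 hs2 hw1 hw2 hw3
      · have hm6 : 6 ≤ m := by omega
        obtain ⟨y, hyinj, hystep⟩ := exists_yC m hm6 hme
        exact master 2 m n (by norm_num) (by omega) (by omega) y s hyinj hystep
          hslt hs1 hs2 hw1 hw2 hw3
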